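/- Let H_r : ℝ^n × ℝ → ℝ be continuous. The following are equivalent: (a) there exist class K∞ functions ρ1, ρ2 such that |u0| ≤ ρ1(|x|) + ρ2(|H_r(x,u0)|) for all x ∈ ℝ^n and u0 ∈ ℝ; (b) (i) for each compact set X ⊂ ℝ^n and each K > 0 there exists M such that |H_r(x,u0)| ≥ K whenever x ∈ X and |u0| ≥ M, and (ii) H_r(0,u0) ≠ 0 for all u0 ≠ 0. -/

import Mathlib

/-- A class `K∞` function: continuous, strictly increasing on `[0,∞)`,
vanishing at `0`, and unbounded. -/
def ClassKInf (ρ : ℝ → ℝ) : Prop :=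
  ContinuousOn ρ (Set.Ici 0) ∧ StrictMonoOn ρ (Set.Ici 0) ∧ ρ 0 = 0 ∧
    ∀ M : ℝ, ∃ s : ℝ, 0 ≤ s ∧ M < ρ s

open Set MeasureTheory intervalIntegral Filter


lemma exists_classKInf_ge (φ : ℝ → ℝ) (hmono : Monotone φ) (hnonneg : ∀ r, 0 ≤ φ r)
    (h0 : φ 0 = 0) (hlim : ∀ ε > 0, ∃ δ > 0, φ δ ≤ ε) :
    ∃ ρ : ℝ → ℝ, ClassKInf ρ ∧ ∀ s, 0 ≤ s → φ s ≤ ρ s := by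
  set G : ℝ → ℝ := fun s => ∫ u in (1:ℝ)..2, φ (s * u) with hG
  have hIntφ : ∀ a b : ℝ, IntervalIntegrable φ volume a b := fun a b =>
    hmono.intervalIntegrable
  have hInt : ∀ s : ℝ, 0 ≤ s → IntervalIntegrable (fun u => φ (s * u)) volume 1 2 := by
    intro s hs
    apply MonotoneOn.intervalIntegrable
    intro a _ b _ hab
    exact hmono (mul_le_mul_of_nonneg_left hab hs)
  -- lower bound
  have hlb : ∀ s : ℝ, 0 ≤ s → φ s ≤ G s := by
    intro s hs
    have h1 : φ s = ∫ _ in (1:ℝ)..2, φ s := by simp; ring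
    rw [h1]
    apply integral_mono_on one_le_two (intervalIntegrable_const) (hInt s hs)
    intro u hu
    exact hmono (le_mul_of_one_le_right hs hu.1)
  -- upper bound
  have hub : ∀ s : ℝ, 0 ≤ s → G s ≤ φ (2 * s) := by
    intro s hs
    have h1 : φ (2 * s) = ∫ _ in (1:ℝ)..2, φ (2 * s) := by simp; ring
    rw [h1]
    apply integral_mono_on one_le_two (hInt s hs) (intervalIntegrable_const)
    intro u hu
    have : s * u ≤ 2 * s := by
      rw [mul_comm 2 s]
      exact mul_le_mul_of_nonneg_left hu.2 hs
    exact hmono this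
  -- monotone
  have hGmono : MonotoneOn G (Ici 0) := by
    intro s1 hs1 s2 hs2 h12
    apply integral_mono_on one_le_two (hInt s1 hs1) (hInt s2 hs2)
    intro u hu
    exact hmono (mul_le_mul_of_nonneg_right h12 (le_trans zero_le_one hu.1))
  have hG0 : G 0 = 0 := by simp [hG, h0]
  have hGnonneg : ∀ s : ℝ, 0 ≤ s → 0 ≤ G s := fun s hs => le_trans (hnonneg s) (hlb s hs)
  -- continuity
  set F : ℝ → ℝ := fun t => ∫ x in (0:ℝ)..t, φ x with hF
  have hFcont : Continuous F := continuous_primitive hIntφ 0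
  have hGform : ∀ s : ℝ, s ≠ 0 → G s = s⁻¹ * (F (2 * s) - F s) := by
    intro s hs
    have := integral_comp_mul_left (a := (1:ℝ)) (b := 2) φ hs
    rw [hG]
    simp only [smul_eq_mul] at this ⊢
    rw [this, mul_one, mul_comm s 2]
    congr 1
    rw [hF]
    rw [← integral_interval_sub_left (hIntφ 0 (2*s)) (hIntφ 0 s)]
  have hGcont : ContinuousOn G (Ici 0) := by
    intro s hs
    rcases eq_or_lt_of_le (mem_Ici.mp hs) with h | h
    · -- continuity at 0 within Ici 0
      rw [ContinuousWithinAt, ← h, hG0, Metric.tendsto_nhdsWithin_nhds]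
      intro ε hε
      obtain ⟨δ, hδ, hδε⟩ := hlim (ε / 2) (by linarith)
      refine ⟨δ / 2, by linarith, ?_⟩
      intro t ht hdist
      rw [Real.dist_eq, sub_zero] at hdist ⊢
      rw [abs_of_nonneg (hGnonneg t ht)]
      have h2t : 2 * t ≤ δ := by
        rw [abs_of_nonneg ht] at hdist; linarith
      calc G t ≤ φ (2 * t) := hub t ht
        _ ≤ φ δ := hmono h2t
        _ ≤ ε / 2 := hδε
        _ < ε := by linarith
    · -- continuity at s > 0
      have hne : s ≠ 0 := ne_of_gt h
      have hca : ContinuousAt (fun t => t⁻¹ * (F (2 * t) - F t)) s := by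
        apply ContinuousAt.mul
        · exact (continuousAt_inv₀ hne)
        · exact ((hFcont.comp (continuous_const.mul continuous_id)).continuousAt).sub
            hFcont.continuousAt
      have : ContinuousAt G s := by
        apply hca.congr
        filter_upwards [eventually_ne_nhds hne] with t htne
        exact (hGform t htne).symm
      exact this.continuousWithinAt
  refine ⟨fun s => s + G s, ⟨?_, ?_, ?_, ?_⟩, ?_⟩
  · exact (continuousOn_id).add hGcont
  · intro s1 hs1 s2 hs2 h12
    exact add_lt_add_of_lt_of_le h12 (hGmono hs1 hs2 h12.le)
  · simp [hG0]
  · intro M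
    refine ⟨max 0 (M + 1), le_max_left _ _, ?_⟩
    have h1 : M + 1 ≤ max 0 (M + 1) := le_max_right _ _
    have h2 : 0 ≤ G (max 0 (M + 1)) := hGnonneg _ (le_max_left _ _)
    show M < max 0 (M + 1) + G (max 0 (M + 1))
    linarith
  · intro s hs
    have := hlb s hs
    show φ s ≤ s + G s
    linarith

theorem relative_degree_bound_iff (n : ℕ)
    (Hr : EuclideanSpace ℝ (Fin n) → ℝ → ℝ)
    (hcont : Continuous fun p : EuclideanSpace ℝ (Fin n) × ℝ => Hr p.1 p.2) :
    (∃ ρ1 ρ2 : ℝ → ℝ, ClassKInf ρ1 ∧ ClassKInf ρ2 ∧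
        ∀ (x : EuclideanSpace ℝ (Fin n)) (u0 : ℝ),
          |u0| ≤ ρ1 ‖x‖ + ρ2 |Hr x u0|) ↔
    ((∀ X : Set (EuclideanSpace ℝ (Fin n)), IsCompact X →
        ∀ K : ℝ, 0 < K → ∃ M : ℝ, ∀ x ∈ X, ∀ u0 : ℝ, M ≤ |u0| → K ≤ |Hr x u0|) ∧
      ∀ u0 : ℝ, u0 ≠ 0 → Hr 0 u0 ≠ 0) := by
  constructor
  · rintro ⟨ρ1, ρ2, ⟨_, h1m, h10, _⟩, ⟨_, h2m, h20, _⟩, hb⟩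
    constructor
    · intro X hX K hK
      obtain ⟨C, hC⟩ := hX.isBounded.exists_norm_le
      set R := max C 0 with hR
      refine ⟨ρ1 R + ρ2 K + 1, ?_⟩
      intro x hx u0 hu0
      by_contra hlt
      push_neg at hlt
      have hxR : ‖x‖ ≤ R := le_trans (hC x hx) (le_max_left _ _)
      have hρ1 : ρ1 ‖x‖ ≤ ρ1 R :=
        h1m.monotoneOn (norm_nonneg x) (le_max_right C 0) hxR
      have hρ2 : ρ2 |Hr x u0| ≤ ρ2 K :=
        h2m.monotoneOn (mem_Ici.mpr (abs_nonneg _)) (mem_Ici.mpr hK.le) hlt.le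
      have := hb x u0
      linarith
    · intro u0 hu0 hzero
      have := hb 0 u0
      rw [norm_zero, h10, hzero, abs_zero, h20] at this
      exact hu0 (abs_nonpos_iff.mp (by linarith))
  · rintro ⟨h1, h2⟩
    -- the sup function
    set S : ℝ → Set ℝ := fun r =>
      insert 0 {v | ∃ x u0, ‖x‖ ≤ r ∧ |Hr x u0| ≤ r ∧ v = |u0|} with hS
    have hSne : ∀ r, (S r).Nonempty := fun r => ⟨0, mem_insert 0 _⟩
    have hSsub : ∀ {r1 r2 : ℝ}, r1 ≤ r2 → S r1 ⊆ S r2 := by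
      intro r1 r2 h v hv
      rcases hv with h0 | ⟨x, u0, hx, hH, hv⟩
      · exact Or.inl h0
      · exact Or.inr ⟨x, u0, hx.trans h, hH.trans h, hv⟩
    have hBdd : ∀ r : ℝ, 0 ≤ r → BddAbove (S r) := by
      intro r hr
      obtain ⟨M, hM⟩ := h1 (Metric.closedBall 0 r) (isCompact_closedBall 0 r)
        (r + 1) (by linarith)
      refine ⟨max M 0, ?_⟩
      rintro v (h0 | ⟨x, u0, hx, hH, hv⟩)
      · simp [h0]
      · by_contra hgt
        push_neg at hgt
        have hMu : M ≤ |u0| := by rw [hv] at hgt; exact le_trans (le_max_left _ _) hgt.le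
        have hxball : x ∈ Metric.closedBall 0 r := by
          rw [Metric.mem_closedBall, dist_zero_right]; exact hx
        have := hM x hxball u0 hMu
        linarith
    set φ : ℝ → ℝ := fun r => sSup (S (max r 0)) with hφ
    have hmono : Monotone φ := by
      intro r1 r2 h
      exact csSup_le_csSup (hBdd _ (le_max_right _ _)) (hSne _)
        (hSsub (max_le_max h le_rfl))
    have hnonneg : ∀ r, 0 ≤ φ r := fun r =>
      le_csSup (hBdd _ (le_max_right _ _)) (mem_insert 0 _)
    have hφ0 : φ 0 = 0 := by
      have hSeq : S (max (0:ℝ) 0) = {0} := by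
        rw [max_self]
        apply subset_antisymm
        · rintro v (h0 | ⟨x, u0, hx, hH, hv⟩)
          · exact h0
          · have hx0 : x = 0 := norm_le_zero_iff.mp hx
            have hH0 : Hr 0 u0 = 0 := by
              rw [hx0] at hH; exact abs_nonpos_iff.mp hH
            have hu0 : u0 = 0 := by
              by_contra hne; exact h2 u0 hne hH0
            simp [hv, hu0]
        · rintro v rfl; exact mem_insert 0 _
      show sSup (S (max (0:ℝ) 0)) = 0
      rw [hSeq]
      exact csSup_singleton 0
    have hE : ∀ (x : EuclideanSpace ℝ (Fin n)) (u0 : ℝ),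
        |u0| ≤ φ (max ‖x‖ |Hr x u0|) := by
      intro x u0
      set m := max ‖x‖ |Hr x u0| with hm
      have hm0 : 0 ≤ m := le_trans (norm_nonneg x) (le_max_left _ _)
      have hmax : max m 0 = m := max_eq_left hm0
      have hmem : |u0| ∈ S (max m 0) := by
        rw [hmax]
        exact Or.inr ⟨x, u0, le_max_left _ _, le_max_right _ _, rfl⟩
      exact le_csSup (hBdd _ (le_max_right _ _)) hmem
    have hlim : ∀ ε > 0, ∃ δ > 0, φ δ ≤ ε := by
      intro ε hε
      by_contra hcon
      push_neg at hcon
      -- for every k, there are x_k, u_k with small norms but |u_k| > ε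
      have hseq : ∀ k : ℕ, ∃ (x : EuclideanSpace ℝ (Fin n)) (u0 : ℝ),
          ‖x‖ ≤ 1 / (k + 1) ∧ |Hr x u0| ≤ 1 / (k + 1) ∧ ε < |u0| := by
        intro k
        have hδ : (0:ℝ) < 1 / (k + 1) := by positivity
        have := hcon (1 / (k + 1)) hδ
        have hmax : max (1 / ((k:ℝ) + 1)) 0 = 1 / (k + 1) := max_eq_left hδ.le
        have hlt : ε < sSup (S (1 / (k + 1))) := by
          have h' : ε < sSup (S (max (1 / ((k:ℝ) + 1)) 0)) := this
          rwa [hmax] at h'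
        obtain ⟨v, hv, hεv⟩ := exists_lt_of_lt_csSup (hSne _) hlt
        rcases hv with h0 | ⟨x, u0, hx, hH, hveq⟩
        · rw [h0] at hεv; linarith
        · exact ⟨x, u0, hx, hH, hveq ▸ hεv⟩
      choose x u hx hu hεu using hseq
      -- u is bounded
      obtain ⟨B, hB⟩ := hBdd 1 zero_le_one
      have huB : ∀ k, u k ∈ Icc (-B) B := by
        intro k
        have h1k : (1:ℝ) / (k + 1) ≤ 1 := by
          rw [div_le_one (by positivity)]; linarith [Nat.cast_nonneg (α := ℝ) k]
        have : |u k| ∈ S 1 :=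
          Or.inr ⟨x k, u k, (hx k).trans h1k, (hu k).trans h1k, rfl⟩
        have := hB this
        rw [mem_Icc]
        constructor <;> [linarith [neg_abs_le (u k)]; linarith [le_abs_self (u k)]]
      obtain ⟨L, hL, ψ, hψmono, hψtend⟩ := (isCompact_Icc (a := -B) (b := B)).tendsto_subseq huB
      -- x ∘ ψ tends to 0
      have hone : Tendsto (fun k : ℕ => 1 / ((k:ℝ) + 1)) atTop (nhds 0) :=
        tendsto_one_div_add_atTop_nhds_zero_nat
      have honeψ : Tendsto (fun k : ℕ => 1 / ((ψ k : ℝ) + 1)) atTop (nhds 0) :=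
        hone.comp hψmono.tendsto_atTop
      have hxtend : Tendsto (fun k => x (ψ k)) atTop (nhds 0) := by
        apply squeeze_zero_norm (fun k => hx (ψ k)) honeψ
      -- Hr along the subsequence tends to Hr 0 L and to 0
      have hpair : Tendsto (fun k => (x (ψ k), u (ψ k))) atTop (nhds (0, L)) :=
        hxtend.prodMk_nhds hψtend
      have hHrtend : Tendsto (fun k => Hr (x (ψ k)) (u (ψ k))) atTop (nhds (Hr 0 L)) :=
        (hcont.tendsto (0, L)).comp hpair
      have hHrzero : Tendsto (fun k => Hr (x (ψ k)) (u (ψ k))) atTop (nhds 0) := by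
        apply squeeze_zero_norm (fun k => ?_) honeψ
        exact hu (ψ k)
      have hHr0L : Hr 0 L = 0 := tendsto_nhds_unique hHrtend hHrzero
      have hεL : ε ≤ |L| := by
        have habs : Tendsto (fun k => |u (ψ k)|) atTop (nhds |L|) :=
          (continuous_abs.tendsto L).comp hψtend
        exact ge_of_tendsto' habs fun k => (hεu (ψ k)).le
      have : L ≠ 0 := by
        intro h; rw [h, abs_zero] at hεL; linarith
      exact h2 L this hHr0L
    obtain ⟨ρ, hρK, hρge⟩ := exists_classKInf_ge φ hmono hnonneg hφ0 hlim
    have hρmono := hρK.2.1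
    have hρ0 := hρK.2.2.1
    have hρnonneg : ∀ s, 0 ≤ s → 0 ≤ ρ s := by
      intro s hs
      rcases eq_or_lt_of_le hs with h | h
      · rw [← h, hρ0]
      · rw [← hρ0]; exact (hρmono (mem_Ici.mpr le_rfl) hs h).le
    refine ⟨ρ, ρ, hρK, hρK, ?_⟩
    intro x u0
    set a := ‖x‖
    set b := |Hr x u0|
    have ha : 0 ≤ a := norm_nonneg x
    have hb : 0 ≤ b := abs_nonneg _
    have hm : 0 ≤ max a b := le_trans ha (le_max_left _ _)
    calc |u0| ≤ φ (max a b) := hE x u0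
      _ ≤ ρ (max a b) := hρge _ hm
      _ ≤ max (ρ a) (ρ b) := by
          rcases max_cases a b with ⟨h, _⟩ | ⟨h, _⟩
          · rw [h]; exact le_max_left _ _
          · rw [h]; exact le_max_right _ _
      _ ≤ ρ a + ρ b := max_le (le_add_of_nonneg_right (hρnonneg b hb))
          (le_add_of_nonneg_left (hρnonneg a ha))
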